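/- Let ρ, a_max, b_min, b_max > 0 with b_min ≤ b_max. Define dRSS(v_f, v_r, s) = max(0, v_r·s + a_max·s²/2 + (v_r + a_max·s)²/(2·b_min) − v_f²/(2·b_max)). Along the combined dynamics y_f' = v_f, v_f' = −b_max, y_r' = v_r, v_r' = a_max, t' = 1 (valid while v_f > 0, v_r ≥ 0, and t < ρ), the quantity I(t) = y_f − y_r − dRSS(v_f, v_r, ρ − t) is nondecreasing: its Lie derivative equals 0 when the inner expression of dRSS is ≥ 0, and equals v_f − v_r ≥ 0 otherwise. -/

import Mathlib

/-- The (remaining-time) RSS safety distance. -/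
noncomputable def dRSS3 (ρ amax bmin bmax vf vr s : ℝ) : ℝ :=
  max 0 (vr * s + amax * s ^ 2 / 2 + (vr + amax * s) ^ 2 / (2 * bmin)
    - vf ^ 2 / (2 * bmax))

theorem stmt7 (ρ amax bmin bmax : ℝ)
    (hρ : 0 < ρ) (ha : 0 < amax) (hb1 : 0 < bmin) (hb2 : 0 < bmax)
    (hle : bmin ≤ bmax)
    (yf vf yr vr : ℝ → ℝ) (a c : ℝ) (hac : a ≤ c) (h0a : 0 ≤ a)
    (hyf : ∀ t ∈ Set.Icc a c, HasDerivAt yf (vf t) t)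
    (hvf : ∀ t ∈ Set.Icc a c, HasDerivAt vf (-bmax) t)
    (hyr : ∀ t ∈ Set.Icc a c, HasDerivAt yr (vr t) t)
    (hvr : ∀ t ∈ Set.Icc a c, HasDerivAt vr amax t)
    (hvfpos : ∀ t ∈ Set.Icc a c, 0 < vf t)
    (hvrpos : ∀ t ∈ Set.Icc a c, 0 ≤ vr t)
    (htρ : ∀ t ∈ Set.Icc a c, t < ρ) :
    MonotoneOn
      (fun t => yf t - yr t - dRSS3 ρ amax bmin bmax (vf t) (vr t) (ρ - t))
      (Set.Icc a c) ∧
    (∀ t ∈ Set.Ioo a c,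
      0 < vr t * (ρ - t) + amax * (ρ - t) ^ 2 / 2
          + (vr t + amax * (ρ - t)) ^ 2 / (2 * bmin) - (vf t) ^ 2 / (2 * bmax) →
      HasDerivAt
        (fun s => yf s - yr s - dRSS3 ρ amax bmin bmax (vf s) (vr s) (ρ - s))
        0 t) ∧
    (∀ t ∈ Set.Ioo a c,
      vr t * (ρ - t) + amax * (ρ - t) ^ 2 / 2
          + (vr t + amax * (ρ - t)) ^ 2 / (2 * bmin) - (vf t) ^ 2 / (2 * bmax) < 0 →
      HasDerivAt
        (fun s => yf s - yr s - dRSS3 ρ amax bmin bmax (vf s) (vr s) (ρ - s))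
        (vf t - vr t) t ∧ 0 ≤ vf t - vr t) := by
  set G : ℝ → ℝ := fun s => vr s * (ρ - s) + amax * (ρ - s) ^ 2 / 2
      + (vr s + amax * (ρ - s)) ^ 2 / (2 * bmin) - (vf s) ^ 2 / (2 * bmax) with hG
  have hIeq : ∀ s, yf s - yr s - dRSS3 ρ amax bmin bmax (vf s) (vr s) (ρ - s)
      = (yf s - yr s - G s) + min (G s) 0 := by
    intro s
    simp only [dRSS3, hG]
    rcases le_total (0 : ℝ) (vr s * (ρ - s) + amax * (ρ - s) ^ 2 / 2
        + (vr s + amax * (ρ - s)) ^ 2 / (2 * bmin) - (vf s) ^ 2 / (2 * bmax)) with h | h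
    · rw [max_eq_right h, min_eq_right h]; ring
    · rw [max_eq_left h, min_eq_left h]; ring
  -- derivative of G
  have hGd : ∀ t ∈ Set.Icc a c, HasDerivAt G (vf t - vr t) t := by
    intro t ht
    have h1 : HasDerivAt (fun s : ℝ => ρ - s) (-1 : ℝ) t := by
      simpa using (hasDerivAt_id t).const_sub ρ
    have A := (hvr t ht).mul h1
    have B := ((h1.pow 2).const_mul amax).div_const 2
    have C := (((hvr t ht).add (h1.const_mul amax)).pow 2).div_const (2 * bmin)
    have D := ((hvf t ht).pow 2).div_const (2 * bmax)
    have E := ((A.add B).add C).sub D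
    have hbne : bmax ≠ 0 := hb2.ne'
    exact E.congr_deriv (by field_simp; ring)
  -- positivity of vf - vr where G < 0
  have hkey : ∀ t ∈ Set.Icc a c, G t < 0 → 0 ≤ vf t - vr t := by
    intro t ht hGt
    have h1 := hvrpos t ht
    have h2 := hvfpos t ht
    have h3 : 0 < ρ - t := by linarith [htρ t ht]
    have hGt' : vr t * (ρ - t) + amax * (ρ - t) ^ 2 / 2
        + (vr t + amax * (ρ - t)) ^ 2 / (2 * bmin) - (vf t) ^ 2 / (2 * bmax) < 0 := hGt
    have t1 : 0 ≤ vr t * (ρ - t) := mul_nonneg h1 h3.le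
    have t2 : 0 ≤ amax * (ρ - t) ^ 2 / 2 := by positivity
    have h6 : (vr t + amax * (ρ - t)) ^ 2 / (2 * bmin) < vf t ^ 2 / (2 * bmax) := by
      linarith
    have h7 : vr t ^ 2 ≤ (vr t + amax * (ρ - t)) ^ 2 := by nlinarith [mul_pos ha h3]
    have h8 : vr t ^ 2 / (2 * bmin) ≤ (vr t + amax * (ρ - t)) ^ 2 / (2 * bmin) :=
      (div_le_div_iff_of_pos_right (by positivity)).2 h7
    have h9 : vr t ^ 2 / (2 * bmax) ≤ vr t ^ 2 / (2 * bmin) :=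
      div_le_div_of_nonneg_left (sq_nonneg _) (by positivity) (by linarith)
    have h10 : vr t ^ 2 / (2 * bmax) < vf t ^ 2 / (2 * bmax) := by linarith
    have h11 : vr t ^ 2 < vf t ^ 2 :=
      (div_lt_div_iff_of_pos_right (by positivity : (0:ℝ) < 2 * bmax)).1 h10
    nlinarith [h11]
  have hGcont : ∀ t ∈ Set.Icc a c, ContinuousAt G t :=
    fun t ht => (hGd t ht).continuousAt
  -- h := yf - yr - G is constant on Icc a c
  have hd0 : ∀ t ∈ Set.Icc a c,
      HasDerivAt (fun u => yf u - yr u - G u) 0 t := by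
    intro t ht
    have := ((hyf t ht).sub (hyr t ht)).sub (hGd t ht)
    exact this.congr_deriv (by ring)
  have hconst : ∀ t ∈ Set.Icc a c,
      yf t - yr t - G t = yf a - yr a - G a := by
    apply constant_of_has_deriv_right_zero
    · exact fun t ht => ((hd0 t ht).continuousAt).continuousWithinAt
    · intro t ht
      exact (hd0 t (Set.Ico_subset_Icc_self ht)).hasDerivWithinAt
  -- monotonicity of min G 0
  have hmin : MonotoneOn (fun s => min (G s) 0) (Set.Icc a c) := by
    intro s hs t ht hst
    show min (G s) 0 ≤ min (G t) 0
    by_contra hlt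
    push_neg at hlt
    have hGt0 : G t < 0 := by
      have h := lt_of_lt_of_le hlt (min_le_right (G s) 0)
      rcases min_lt_iff.1 h with h' | h'
      · exact h'
      · exact absurd h' (lt_irrefl 0)
    rw [min_eq_left hGt0.le] at hlt
    set m := min (G s) 0 with hm
    have hm0 : m ≤ 0 := min_le_right _ _
    have hms : m ≤ G s := min_le_left _ _
    have hsub : Set.Icc s t ⊆ Set.Icc a c := Set.Icc_subset_Icc hs.1 ht.2
    have hcont' : ContinuousOn G (Set.Icc s t) :=
      fun x hx => (hGcont x (hsub hx)).continuousWithinAt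
    obtain ⟨u, hu, hGu⟩ := intermediate_value_Icc' hst hcont' ⟨hlt.le, hms⟩
    set S := {x ∈ Set.Icc s t | G x = m} with hS
    have hSne : S.Nonempty := ⟨u, hu, hGu⟩
    have hSbd : BddAbove S := ⟨t, fun x hx => hx.1.2⟩
    have hSc : IsClosed S := by
      have : S = Set.Icc s t ∩ G ⁻¹' {m} := by ext x; simp [hS]
      rw [this]
      exact hcont'.preimage_isClosed_of_isClosed isClosed_Icc isClosed_singleton
    set w := sSup S with hw
    have hwS : w ∈ S := hSc.csSup_mem hSne hSbd
    have hwt : w ≤ t := hwS.1.2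
    have hwIcc : w ∈ Set.Icc a c := hsub hwS.1
    have hGw : G w = m := hwS.2
    have hwt' : w < t := by
      rcases lt_or_eq_of_le hwt with h | h
      · exact h
      · rw [h] at hGw; linarith
    -- on (w, t], G < m
    have hneg : ∀ x ∈ Set.Ioc w t, G x < m := by
      intro x hx
      by_contra hge
      push_neg at hge
      have hxt : Set.Icc x t ⊆ Set.Icc s t :=
        Set.Icc_subset_Icc (le_trans hwS.1.1 hx.1.le) le_rfl
      obtain ⟨y, hy, hGy⟩ := intermediate_value_Icc' hx.2
        (hcont'.mono hxt) ⟨hlt.le, hge⟩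
      have : y ≤ w := le_csSup hSbd ⟨hxt hy, hGy⟩
      have : w < y := lt_of_lt_of_le hx.1 hy.1
      linarith
    -- G is monotone on [w, t]
    have hmono : MonotoneOn G (Set.Icc w t) := by
      have hsub2 : Set.Icc w t ⊆ Set.Icc a c :=
        Set.Icc_subset_Icc hwIcc.1 ht.2
      apply monotoneOn_of_deriv_nonneg (convex_Icc w t)
        (fun x hx => (hGcont x (hsub2 hx)).continuousWithinAt)
      · intro x hx
        rw [interior_Icc] at hx
        exact ((hGd x (hsub2 (Set.Ioo_subset_Icc_self hx))).differentiableAt).differentiableWithinAt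
      · intro x hx
        rw [interior_Icc] at hx
        have hx' : x ∈ Set.Icc a c := hsub2 (Set.Ioo_subset_Icc_self hx)
        rw [(hGd x hx').deriv]
        exact hkey x hx' (lt_of_lt_of_le (hneg x ⟨hx.1, hx.2.le⟩) hm0)
    have := hmono ⟨le_rfl, hwt⟩ ⟨hwt, le_rfl⟩ hwt
    rw [hGw] at this
    linarith
  refine ⟨?_, ?_, ?_⟩
  · intro s hs t ht hst
    show yf s - yr s - dRSS3 ρ amax bmin bmax (vf s) (vr s) (ρ - s)
        ≤ yf t - yr t - dRSS3 ρ amax bmin bmax (vf t) (vr t) (ρ - t)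
    rw [hIeq s, hIeq t, hconst s hs, hconst t ht]
    have h2 : min (G s) 0 ≤ min (G t) 0 := hmin hs ht hst
    linarith
  · intro t ht hpos
    have ht' : t ∈ Set.Icc a c := Set.Ioo_subset_Icc_self ht
    have hpos' : 0 < G t := hpos
    have hev : ∀ᶠ s in nhds t, 0 < G s :=
      (hGcont t ht').eventually (eventually_gt_nhds hpos')
    have heq : (fun s => yf s - yr s - dRSS3 ρ amax bmin bmax (vf s) (vr s) (ρ - s))
        =ᶠ[nhds t] fun s => yf s - yr s - G s := by
      filter_upwards [hev] with s hs
      simp [dRSS3, hG, max_eq_right hs.le]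
      simp only [hG] at hs; linarith
    exact (hd0 t ht').congr_of_eventuallyEq heq
  · intro t ht hneg
    have ht' : t ∈ Set.Icc a c := Set.Ioo_subset_Icc_self ht
    have hneg' : G t < 0 := hneg
    have hev : ∀ᶠ s in nhds t, G s < 0 :=
      (hGcont t ht').eventually (eventually_lt_nhds hneg')
    have heq : (fun s => yf s - yr s - dRSS3 ρ amax bmin bmax (vf s) (vr s) (ρ - s))
        =ᶠ[nhds t] fun s => yf s - yr s := by
      filter_upwards [hev] with s hs
      simp [dRSS3, hG, max_eq_left hs.le]
      simp only [hG] at hs; linarith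
    refine ⟨((hyf t ht').sub (hyr t ht')).congr_of_eventuallyEq heq, hkey t ht' hneg'⟩
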